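/- Let γ : ℝ → ℝ³ be the curve γ(x) = (sin x, cos x, arctan x), and define its curvature by κ(x) = ‖γ'(x) × γ''(x)‖ / ‖γ'(x)‖³, where × denotes the cross product in ℝ³. Then for every x ∈ ℝ one has 1/2 ≤ κ(x) and κ(x) < 1. -/

import Mathlib

open Real

private lemma norm_symm_three (p q r : ℝ) :
    ‖(WithLp.equiv 2 (Fin 3 → ℝ)).symm ![p, q, r]‖ = Real.sqrt (p^2 + q^2 + r^2) := by
  rw [EuclideanSpace.norm_eq]
  simp only [WithLp.equiv_symm_apply, WithLp.ofLp_toLp, Fin.sum_univ_three, Matrix.cons_val_zero,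
    Matrix.cons_val_one, Matrix.head_cons, Matrix.cons_val_two, Matrix.tail_cons,
    Real.norm_eq_abs, sq_abs]

private lemma cross_three (s c u w : ℝ) (hsc : s^2 + c^2 = 1) :
    crossProduct ![c, -s, u] ![-s, -c, w] = ![-s*w + u*c, -u*s - c*w, -1] := by
  rw [cross_apply]
  funext i
  fin_cases i
  · simp
  · simp
  · simp
    linear_combination -hsc

private lemma bound_aux (x u w k : ℝ) (hu0 : 0 < u) (hu1 : u ≤ 1)
    (huu : u * (1 + x^2) = 1) (hw2 : w^2 = 4 * x^2 * u^4)
    (hknn : 0 ≤ k) (hksq : k^2 = (1 + u^2 + w^2) / (1 + u^2)^3) :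
    1/2 ≤ k ∧ k < 1 := by
  have hB3 : (0:ℝ) < (1 + u^2)^3 := by positivity
  have h4 : 4 * x^2 * u^2 ≤ 1 := by nlinarith [sq_nonneg (u * (1 - x^2)), huu]
  have h5 : w^2 ≤ u^2 := by nlinarith [mul_le_mul_of_nonneg_right h4 (sq_nonneg u)]
  have hu2 : u^2 ≤ 1 := by nlinarith
  have hlt : 1 + u^2 + w^2 < (1 + u^2)^3 := by
    nlinarith [h5, hu0, pow_pos hu0 4, pow_pos hu0 6, sq_nonneg u]
  have hge : (1 + u^2)^3 ≤ 4 * (1 + u^2 + w^2) := by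
    nlinarith [sq_nonneg w, hu2, sq_nonneg (1 - u^2),
      mul_le_mul_of_nonneg_right hu2 (sq_nonneg (u^2)),
      mul_le_mul_of_nonneg_right hu2 (sq_nonneg u)]
  constructor
  · have h : (1:ℝ)/4 ≤ k^2 := by
      rw [hksq, le_div_iff₀ hB3]; linarith
    nlinarith
  · have h : k^2 < 1 := by
      rw [hksq, div_lt_one hB3]; exact hlt
    nlinarith

theorem spiral_curvature_bounds
    (γ : ℝ → EuclideanSpace ℝ (Fin 3))
    (hγ : ∀ x, γ x = (WithLp.equiv 2 (Fin 3 → ℝ)).symm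
      ![Real.sin x, Real.cos x, Real.arctan x])
    (κ : ℝ → ℝ)
    (hκ : ∀ x, κ x = ‖(WithLp.equiv 2 (Fin 3 → ℝ)).symm
        (crossProduct (WithLp.equiv 2 (Fin 3 → ℝ) (deriv γ x))
          (WithLp.equiv 2 (Fin 3 → ℝ) (deriv (deriv γ) x)))‖ / ‖deriv γ x‖ ^ 3) :
    ∀ x : ℝ, 1 / 2 ≤ κ x ∧ κ x < 1 := by
  have hγf : γ = fun x => (WithLp.equiv 2 (Fin 3 → ℝ)).symm
      ![Real.sin x, Real.cos x, Real.arctan x] := funext hγ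
  have key : ∀ (F : ℝ → Fin 3 → ℝ) (v : Fin 3 → ℝ) (x : ℝ), HasDerivAt F v x →
      HasDerivAt (fun x => (WithLp.equiv 2 (Fin 3 → ℝ)).symm (F x))
        ((WithLp.equiv 2 (Fin 3 → ℝ)).symm v) x := fun F v x h =>
    ((EuclideanSpace.equiv (Fin 3) ℝ).symm.toContinuousLinearMap.hasFDerivAt).comp_hasDerivAt x h
  have hsq : ∀ y : ℝ, HasDerivAt (fun x : ℝ => 1 + x^2) (2*y) y := fun y => by
    simpa using ((hasDerivAt_pow 2 y).const_add 1)
  have h1 : ∀ y, HasDerivAt γ ((WithLp.equiv 2 (Fin 3 → ℝ)).symm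
      ![Real.cos y, -Real.sin y, (1+y^2)⁻¹]) y := by
    intro y
    rw [hγf]
    refine key _ _ y (hasDerivAt_pi.2 fun i => ?_)
    fin_cases i
    · simpa using Real.hasDerivAt_sin y
    · simpa using Real.hasDerivAt_cos y
    · simpa [one_div] using Real.hasDerivAt_arctan y
  have hd1 : deriv γ = fun y => (WithLp.equiv 2 (Fin 3 → ℝ)).symm
      ![Real.cos y, -Real.sin y, (1+y^2)⁻¹] := funext fun y => (h1 y).deriv
  have h2 : ∀ y, HasDerivAt (deriv γ) ((WithLp.equiv 2 (Fin 3 → ℝ)).symm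
      ![-Real.sin y, -Real.cos y, -(2*y)/(1+y^2)^2]) y := by
    intro y
    rw [hd1]
    refine key _ _ y (hasDerivAt_pi.2 fun i => ?_)
    fin_cases i
    · simpa using Real.hasDerivAt_cos y
    · simpa [Pi.neg_def] using (Real.hasDerivAt_sin y).neg
    · have := (hsq y).inv (by positivity)
      simpa [neg_div, Pi.inv_def] using this
  intro x
  have hd1x : deriv γ x = (WithLp.equiv 2 (Fin 3 → ℝ)).symm
      ![Real.cos x, -Real.sin x, (1+x^2)⁻¹] := (h1 x).deriv
  have hd2 : deriv (deriv γ) x = (WithLp.equiv 2 (Fin 3 → ℝ)).symm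
      ![-Real.sin x, -Real.cos x, -(2*x)/(1+x^2)^2] := (h2 x).deriv
  set u : ℝ := (1+x^2)⁻¹ with hu
  set w : ℝ := -(2*x)/(1+x^2)^2 with hw
  set s := Real.sin x with hs
  set c := Real.cos x with hc
  have hsc : s^2 + c^2 = 1 := Real.sin_sq_add_cos_sq x
  have hx0 : (0:ℝ) < 1 + x^2 := by positivity
  have hu0 : 0 < u := by positivity
  have hu1 : u ≤ 1 := by
    rw [hu, inv_le_one_iff₀]; right; nlinarith
  have huu : u * (1 + x^2) = 1 := inv_mul_cancel₀ (ne_of_gt hx0)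
  have hw2 : w^2 = 4 * x^2 * u^4 := by
    rw [hw, hu, div_pow, neg_pow]
    field_simp
    ring
  have e1 : (WithLp.equiv 2 (Fin 3 → ℝ)) (deriv γ x) = ![c, -s, u] := by
    rw [hd1x, Equiv.apply_symm_apply]
  have e2 : (WithLp.equiv 2 (Fin 3 → ℝ)) (deriv (deriv γ) x) = ![-s, -c, w] := by
    rw [hd2, Equiv.apply_symm_apply]
  have hκx : κ x = Real.sqrt (1 + u^2 + w^2) / Real.sqrt (1 + u^2) ^ 3 := by
    rw [hκ, e1, e2, cross_three s c u w hsc, norm_symm_three, hd1x, norm_symm_three,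
      show (-s*w + u*c)^2 + (-u*s - c*w)^2 + (-1:ℝ)^2 = 1 + u^2 + w^2 by
        linear_combination (u^2 + w^2) * hsc,
      show c^2 + (-s)^2 + u^2 = 1 + u^2 by linear_combination hsc]
  have hA0 : (0:ℝ) ≤ 1 + u^2 + w^2 := by positivity
  have hB0 : (0:ℝ) ≤ 1 + u^2 := by positivity
  have hκnn : 0 ≤ κ x := by rw [hκx]; positivity
  have hκsq : κ x ^ 2 = (1 + u^2 + w^2) / (1 + u^2)^3 := by
    rw [hκx, div_pow, ← pow_mul, mul_comm 3 2, pow_mul, Real.sq_sqrt hA0,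
      Real.sq_sqrt hB0]
  exact bound_aux x u w (κ x) hu0 hu1 huu hw2 hκnn hκsq
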